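/- Say a linear order L has property (*) if every uncountable subset of L contains an uncountable subset order-isomorphic to a set of real numbers. If a linear order L has property (*), then for every countable ordinal α the lexicographic power L^α also has property (*). -/

import Mathlib

open Ordinal Set

noncomputable section

/-- Parity of an ordinal: `a = γ + n` with `γ` limit, `n < ω`; even iff `n` is even. -/
def OrdEven (a : Ordinal) : Prop := a % 2 = 0

/-- Upper semicontinuity. -/
def USC {X : Type} [TopologicalSpace X] (f : X → ℝ) : Prop :=
  ∀ r : ℝ, IsOpen (f ⁻¹' Set.Iio r)

/-- The least ordinal where two transfinite sequences differ. -/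
def dOrd (f g : Ordinal → ℝ) : Ordinal := sInf {a | f a ≠ g a}

/-- The alternating lexicographical order on transfinite sequences of reals. -/
def AltLex (f g : Ordinal → ℝ) : Prop :=
  f ≠ g ∧ ((OrdEven (dOrd f g) ∧ f (dOrd f g) < g (dOrd f g)) ∨
    (¬ OrdEven (dOrd f g) ∧ g (dOrd f g) < f (dOrd f g)))

/-- `f` encodes a strictly decreasing countable transfinite sequence in `[0,1]`
with last element `0` at index `ξ` (padded with `0` beyond `ξ`). -/
def IsDSeqLen (f : Ordinal → ℝ) (ξ : Ordinal) : Prop :=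
  ξ < (Cardinal.aleph 1).ord ∧ (∀ a, f a ∈ Set.Icc (0:ℝ) 1) ∧
  (∀ a b, a < b → b ≤ ξ → f b < f a) ∧ (∀ a, ξ ≤ a → f a = 0)

/-- Membership in `[0,1]^{<ω₁}_{↘0}`. -/
def IsDSeq (f : Ordinal → ℝ) : Prop := ∃ ξ, IsDSeqLen f ξ

/-- Property (*): every uncountable subset contains an uncountable subset
order-isomorphic to a set of reals. -/
def PropStarRel (α : Type*) (r : α → α → Prop) : Prop :=
  ∀ A : Set α, ¬ A.Countable → ∃ B ⊆ A, ¬ B.Countable ∧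
    ∃ g : α → ℝ, (∀ x ∈ B, ∀ y ∈ B, r x y → g x < g y) ∧ Set.InjOn g B

/-- The lexicographic order on the power `L^a`. -/
def LexPowRel (L : Type) [LinearOrder L] (a : Ordinal) :
    ({b : Ordinal // b < a} → L) → ({b : Ordinal // b < a} → L) → Prop :=
  fun x y => ∃ δ : {b : Ordinal // b < a},
    (∀ γ : {b : Ordinal // b < a}, γ.1 < δ.1 → x γ = y γ) ∧ x δ < y δ

namespace Star16

variable {L : Type} [LinearOrder L]

theorem lex_total {a : Ordinal} {x y : {b : Ordinal // b < a} → L} (hxy : x ≠ y) :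
    LexPowRel L a x y ∨ LexPowRel L a y x := by
  set S : Set Ordinal := {c | ∃ h : c < a, x ⟨c, h⟩ ≠ y ⟨c, h⟩} with hS
  have hne : S.Nonempty := by
    by_contra hemp
    apply hxy
    funext γ
    by_contra hg
    exact hemp ⟨γ.1, γ.2, by simpa using hg⟩
  obtain ⟨hδa, hδne⟩ := Ordinal.lt_wf.min_mem S hne
  have hagree : ∀ γ : {b : Ordinal // b < a}, γ.1 < Ordinal.lt_wf.min S hne → x γ = y γ := by
    intro γ hγ
    by_contra hg
    exact Ordinal.lt_wf.not_lt_min S ⟨γ.2, by simpa using hg⟩ hγ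
  rcases lt_or_gt_of_ne hδne with h1 | h1
  · exact Or.inl ⟨⟨_, hδa⟩, hagree, h1⟩
  · exact Or.inr ⟨⟨_, hδa⟩, fun γ hγ => (hagree γ hγ).symm, h1⟩

theorem lex_asymm {a : Ordinal} {x y : {b : Ordinal // b < a} → L}
    (h1 : LexPowRel L a x y) (h2 : LexPowRel L a y x) : False := by
  obtain ⟨δ₁, ha1, hl1⟩ := h1
  obtain ⟨δ₂, ha2, hl2⟩ := h2
  rcases lt_trichotomy δ₁.1 δ₂.1 with hc | hc | hc
  · exact absurd (ha2 δ₁ hc).symm (ne_of_lt hl1)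
  · have : δ₁ = δ₂ := Subtype.ext hc
    subst this
    exact absurd (lt_trans hl1 hl2) (lt_irrefl _)
  · exact absurd (ha1 δ₂ hc).symm (ne_of_lt hl2)

theorem lex_irrefl {a : Ordinal} {x : {b : Ordinal // b < a} → L}
    (h1 : LexPowRel L a x x) : False := lex_asymm h1 h1

theorem lex_trans {a : Ordinal} {x y z : {b : Ordinal // b < a} → L}
    (h1 : LexPowRel L a x y) (h2 : LexPowRel L a y z) : LexPowRel L a x z := by
  obtain ⟨δ₁, ha1, hl1⟩ := h1
  obtain ⟨δ₂, ha2, hl2⟩ := h2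
  rcases lt_trichotomy δ₁.1 δ₂.1 with hc | hc | hc
  · exact ⟨δ₁, fun γ hγ => (ha1 γ hγ).trans (ha2 γ (hγ.trans hc)),
      lt_of_lt_of_le hl1 (le_of_eq (ha2 δ₁ hc))⟩
  · have : δ₁ = δ₂ := Subtype.ext hc
    subst this
    exact ⟨δ₁, fun γ hγ => (ha1 γ hγ).trans (ha2 γ hγ), lt_trans hl1 hl2⟩
  · exact ⟨δ₂, fun γ hγ => (ha1 γ (hγ.trans hc)).trans (ha2 γ hγ),
      lt_of_le_of_lt (le_of_eq (ha1 δ₂ hc)) hl2⟩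

/-- Restriction map. -/
def proj {a b : Ordinal} (hba : b ≤ a) (x : {c : Ordinal // c < a} → L) :
    {c : Ordinal // c < b} → L :=
  fun c => x ⟨c.1, lt_of_lt_of_le c.2 hba⟩

theorem proj_mono {a b : Ordinal} (hba : b ≤ a) {x y : {c : Ordinal // c < a} → L}
    (hxy : LexPowRel L a x y) :
    proj hba x = proj hba y ∨ LexPowRel L b (proj hba x) (proj hba y) := by
  obtain ⟨δ, hag, hlt⟩ := hxy
  rcases lt_or_ge δ.1 b with hδb | hδb
  · exact Or.inr ⟨⟨δ.1, hδb⟩, fun γ hγ => hag ⟨γ.1, lt_of_lt_of_le γ.2 hba⟩ hγ, hlt⟩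
  · left
    funext γ
    exact hag ⟨γ.1, lt_of_lt_of_le γ.2 hba⟩ (lt_of_lt_of_le γ.2 hδb)

/-- A countable separating family of down-sets yields a real embedding. -/
theorem embed_of_sep {X : Type*} (r : X → X → Prop) (B : Set X) (ι : Type*) [Countable ι]
    (D : ι → Set X)
    (down : ∀ i, ∀ x ∈ B, ∀ y ∈ B, r x y → y ∈ D i → x ∈ D i)
    (sep : ∀ x ∈ B, ∀ y ∈ B, r x y → ∃ i, x ∈ D i ∧ y ∉ D i)
    (total : ∀ x ∈ B, ∀ y ∈ B, x ≠ y → r x y ∨ r y x) :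
    ∃ g : X → ℝ, (∀ x ∈ B, ∀ y ∈ B, r x y → g x < g y) ∧ Set.InjOn g B := by
  obtain ⟨e, he⟩ := Countable.exists_injective_nat ι
  classical
  set f : X → ι → ℝ := fun x i => if x ∈ D i then 0 else ((1:ℝ)/2) ^ (e i) with hf
  have hw : Summable fun i : ι => ((1:ℝ)/2) ^ (e i) := summable_geometric_two.comp_injective he
  have hsumm : ∀ x, Summable (f x) := by
    intro x
    apply Summable.of_nonneg_of_le _ _ hw
    · intro i; dsimp [f]; split <;> positivity
    · intro i; dsimp [f]; split
      · positivity
      · exact le_refl _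
  have hmono : ∀ x ∈ B, ∀ y ∈ B, r x y → (∑' i, f x i) < ∑' i, f y i := by
    intro x hx y hy hr
    obtain ⟨i₀, hxi, hyi⟩ := sep x hx y hy hr
    apply Summable.tsum_lt_tsum (i := i₀) _ _ (hsumm x) (hsumm y)
    · intro i
      dsimp [f]
      by_cases hyD : y ∈ D i
      · simp [hyD, down i x hx y hy hr hyD]
      · simp only [hyD, if_false]
        split
        · positivity
        · exact le_refl _
    · dsimp [f]
      simp only [hxi, if_true, hyi, if_false]
      positivity
  refine ⟨fun x => ∑' i, f x i, hmono, ?_⟩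
  intro x hx y hy hgxy
  by_contra hne
  rcases total x hx y hy hne with hr | hr
  · exact absurd hgxy (ne_of_lt (hmono x hx y hy hr))
  · exact absurd hgxy.symm (ne_of_lt (hmono y hy x hx hr))

theorem countable_sub {a : Ordinal} (ha : a < (Cardinal.aleph 1).ord) :
    Countable {b : Ordinal // b < a} := by
  have h1 : a.card < Cardinal.aleph 1 := Cardinal.lt_ord.mp ha
  have h2 : a.card ≤ Cardinal.aleph0 := by
    rwa [← Cardinal.succ_aleph0, Order.lt_succ_iff] at h1
  rw [← Cardinal.mk_le_aleph0_iff,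
    show (Cardinal.mk {b : Ordinal // b < a}) = _ from Ordinal.mk_Iio_ordinal a]
  exact le_trans (Cardinal.lift_le.mpr h2) (le_of_eq Cardinal.lift_aleph0)

end Star16

theorem stmt_16 (L : Type) [LinearOrder L] (h : PropStarRel L (· < ·))
    (a : Ordinal) (ha : a < (Cardinal.aleph 1).ord) :
    PropStarRel ({b : Ordinal // b < a} → L) (LexPowRel L a) := by
  classical
  revert ha
  induction a using Ordinal.induction with
  | h a IH =>
  intro ha A hA
  by_cases hproj : ∃ b, ∃ hb : b < a, ¬ (Star16.proj (le_of_lt hb) '' A).Countable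
  · -- Case 1: some proper projection of A is uncountable
    obtain ⟨b, hb, hbu⟩ := hproj
    obtain ⟨B', hB'sub, hB'u, g, hg, hginj⟩ := IH b hb (hb.trans ha) _ hbu
    have hAne : A.Nonempty := Set.nonempty_iff_ne_empty.mpr
      (fun hemp => hA (hemp ▸ Set.countable_empty))
    haveI : Nonempty ({c : Ordinal // c < a} → L) := ⟨hAne.choose⟩
    set π := Star16.proj (L := L) (le_of_lt hb) with hπ
    set lft : ({c : Ordinal // c < b} → L) → ({c : Ordinal // c < a} → L) := fun z =>
      if hz : z ∈ π '' A then hz.choose else Classical.arbitrary _ with hlft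
    have hlA : ∀ z ∈ B', lft z ∈ A ∧ π (lft z) = z := by
      intro z hz
      have hz' : z ∈ π '' A := hB'sub hz
      simp only [hlft, dif_pos hz']
      exact ⟨hz'.choose_spec.1, hz'.choose_spec.2⟩
    refine ⟨lft '' B', ?_, ?_, g ∘ π, ?_, ?_⟩
    · rintro x ⟨z, hz, rfl⟩; exact (hlA z hz).1
    · intro hc
      apply hB'u
      have : B' ⊆ π '' (lft '' B') := by
        intro z hz
        exact ⟨lft z, Set.mem_image_of_mem _ hz, (hlA z hz).2⟩
      exact Set.Countable.mono this (hc.image π)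
    · rintro x ⟨z₁, hz₁, rfl⟩ y ⟨z₂, hz₂, rfl⟩ hr
      rcases Star16.proj_mono (le_of_lt hb) hr with heq | hlex
      · exfalso
        rw [← hπ] at heq
        rw [(hlA z₁ hz₁).2, (hlA z₂ hz₂).2] at heq
        subst heq
        exact Star16.lex_irrefl hr
      · rw [← hπ] at hlex
        rw [Function.comp_apply, Function.comp_apply, (hlA z₁ hz₁).2, (hlA z₂ hz₂).2]
        rw [(hlA z₁ hz₁).2, (hlA z₂ hz₂).2] at hlex
        exact hg z₁ hz₁ z₂ hz₂ hlex
    · rintro x ⟨z₁, hz₁, rfl⟩ y ⟨z₂, hz₂, rfl⟩ hgxy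
      have := hginj (by rw [(hlA z₁ hz₁).2]; exact hz₁) (by rw [(hlA z₂ hz₂).2]; exact hz₂) hgxy
      rw [(hlA z₁ hz₁).2, (hlA z₂ hz₂).2] at this
      rw [this]
  · -- Case 2: all proper projections countable
    push_neg at hproj
    rcases Ordinal.zero_or_succ_or_isSuccLimit a with rfl | ⟨c, rfl⟩ | hlim
    · -- a = 0 : the type is a subsingleton
      haveI : IsEmpty {b : Ordinal // b < (0:Ordinal)} :=
        ⟨fun b => (not_lt_bot (a := b.1) b.2)⟩
      exact absurd (Set.to_countable A) hA
    · -- successor case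
      have hc : c < Order.succ c := Order.lt_succ c
      set π := Star16.proj (L := L) (le_of_lt hc) with hπ
      have hπA : (π '' A).Countable := hproj c hc
      have hfib : ∃ s, ¬ ({x ∈ A | π x = s}).Countable := by
        by_contra hall
        push_neg at hall
        apply hA
        have hsub : A ⊆ ⋃ z ∈ π '' A, {x ∈ A | π x = z} := by
          intro x hx
          exact Set.mem_biUnion (Set.mem_image_of_mem _ hx) ⟨hx, rfl⟩
        exact Set.Countable.mono hsub (hπA.biUnion fun z _ => hall z)
      obtain ⟨s, hsu⟩ := hfib
      set F := {x ∈ A | π x = s} with hF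
      set e : ({b : Ordinal // b < Order.succ c} → L) → L :=
        fun x => x ⟨c, hc⟩ with he
      have heinj : Set.InjOn e F := by
        intro x hx y hy hexy
        funext γ
        rcases lt_or_eq_of_le (Order.lt_succ_iff.mp γ.2) with hγ | hγ
        · have := congrFun (hx.2.trans hy.2.symm) ⟨γ.1, hγ⟩
          simpa [π, Star16.proj] using this
        · have hγeq : γ = ⟨c, hc⟩ := Subtype.ext hγ
          rw [hγeq]
          exact hexy
      have himgu : ¬ (e '' F).Countable := fun hcnt =>
        hsu (Set.countable_of_injective_of_countable_image heinj hcnt)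
      obtain ⟨S, hSsub, hSu, g, hg, hginj⟩ := h _ himgu
      refine ⟨F ∩ e ⁻¹' S, fun x hx => hx.1.1, ?_, g ∘ e, ?_, ?_⟩
      · intro hcnt
        apply hSu
        have : S ⊆ e '' (F ∩ e ⁻¹' S) := by
          intro t ht
          obtain ⟨x, hxF, rfl⟩ := hSsub ht
          exact ⟨x, ⟨hxF, ht⟩, rfl⟩
        exact Set.Countable.mono this (hcnt.image e)
      · rintro x ⟨hxF, hxS⟩ y ⟨hyF, hyS⟩ ⟨δ, hag, hlt⟩
        have hδc : δ = ⟨c, hc⟩ := by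
          apply Subtype.ext
          rcases lt_or_eq_of_le (Order.lt_succ_iff.mp δ.2) with hδ | hδ
          · exfalso
            have := congrFun (hxF.2.trans hyF.2.symm) ⟨δ.1, hδ⟩
            have hxy : x δ = y δ := by simpa [π, Star16.proj] using this
            exact absurd hxy (ne_of_lt hlt)
          · exact hδ
        subst hδc
        exact hg _ hxS _ hyS hlt
      · rintro x ⟨hxF, hxS⟩ y ⟨hyF, hyS⟩ hgxy
        exact heinj hxF hyF (hginj hxS hyS hgxy)
    · -- limit case
      haveI hcnt : Countable {b : Ordinal // b < a} := Star16.countable_sub ha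
      haveI : ∀ b : {b : Ordinal // b < a},
          Countable ↥(Star16.proj (L := L) (le_of_lt b.2) '' A) :=
        fun b => (hproj b.1 b.2).to_subtype
      set ι := Σ b : {b : Ordinal // b < a}, ↥(Star16.proj (L := L) (le_of_lt b.2) '' A) with hι
      haveI : Countable ι := inferInstance
      set D : ι → Set ({b : Ordinal // b < a} → L) := fun i =>
        {x | Star16.proj (le_of_lt i.1.2) x = i.2.1 ∨
          LexPowRel L i.1.1 (Star16.proj (le_of_lt i.1.2) x) i.2.1} with hD
      obtain ⟨g, hg, hginj⟩ := Star16.embed_of_sep (LexPowRel L a) A ι D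
        (by -- down
          rintro ⟨b, s⟩ x _ y _ hr hy
          rcases Star16.proj_mono (le_of_lt b.2) hr with heq | hlex
          · rcases hy with hy | hy
            · exact Or.inl (heq.trans hy)
            · exact Or.inr (heq ▸ hy)
          · rcases hy with hy | hy
            · exact Or.inr (hy ▸ hlex)
            · exact Or.inr (Star16.lex_trans hlex hy))
        (by -- sep
          rintro x hx y hy ⟨δ, hag, hlt⟩
          have hsa : Order.succ δ.1 < a := hlim.succ_lt δ.2
          have hmem : Star16.proj (L := L) (le_of_lt hsa) x ∈
              Star16.proj (L := L) (le_of_lt hsa) '' A := Set.mem_image_of_mem _ hx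
          refine ⟨⟨⟨Order.succ δ.1, hsa⟩, ⟨_, hmem⟩⟩, Or.inl rfl, ?_⟩
          rintro (heq | hlex)
          · have := congrFun heq ⟨δ.1, Order.lt_succ δ.1⟩
            have hxy : y δ = x δ := by
              have hδeq : (⟨δ.1, lt_of_lt_of_le (Order.lt_succ δ.1) (le_of_lt hsa)⟩ :
                  {b : Ordinal // b < a}) = δ := Subtype.ext rfl
              simpa [Star16.proj, hδeq] using this
            exact absurd hxy.symm (ne_of_lt hlt)
          · apply Star16.lex_asymm hlex
            refine ⟨⟨δ.1, Order.lt_succ δ.1⟩, ?_, ?_⟩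
            · intro γ hγ
              exact hag ⟨γ.1, lt_of_lt_of_le γ.2 (le_of_lt hsa)⟩ hγ
            · show x ⟨δ.1, _⟩ < y ⟨δ.1, _⟩
              have hδeq : (⟨δ.1, lt_of_lt_of_le (Order.lt_succ δ.1) (le_of_lt hsa)⟩ :
                  {b : Ordinal // b < a}) = δ := Subtype.ext rfl
              rw [hδeq]
              exact hlt)
        (by intro x _ y _ hxy; exact Star16.lex_total hxy)
      exact ⟨A, subset_rfl, hA, g, hg, hginj⟩
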